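/- Let α > 1 be a real number. The map π from the set of sequences of positive integers to (0,1] defined by π((d_i)) = ⟨d_i⟩_α is surjective: every x ∈ (0,1] can be written as x = ⟨d_i⟩_α for some sequence (d_i)_{i≥1} of positive integers. -/

import Mathlib

/-- The α-expansion value ⟨d_i⟩_α = ∑_{i=1}^∞ (α-1)^{i-1} α^{-(d_1+⋯+d_i)},
with the digit sequence `d : ℕ → ℕ` indexed from 0 (so `d 0` is the first digit). -/
noncomputable def alphaExpansion (α : ℝ) (d : ℕ → ℕ) : ℝ :=
  ∑' i : ℕ, (α - 1) ^ i * α ^ (-((∑ j ∈ Finset.range (i + 1), d j : ℕ) : ℤ))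

open Classical in
noncomputable def adigit (α x : ℝ) : ℕ :=
  if h : ∃ n : ℕ, α ^ (-(n : ℤ)) < x then Nat.find h else 1

noncomputable def aseq (α x : ℝ) : ℕ → ℝ
  | 0 => x
  | k + 1 => (aseq α x k * α ^ (adigit α (aseq α x k)) - 1) / (α - 1)

lemma adigit_exists {α x : ℝ} (hα : 1 < α) (hx : 0 < x) :
    ∃ n : ℕ, α ^ (-(n : ℤ)) < x := by
  have h1 : α⁻¹ < 1 := inv_lt_one_of_one_lt₀ hα
  obtain ⟨n, hn⟩ := exists_pow_lt_of_lt_one hx h1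
  exact ⟨n, by rwa [zpow_neg, zpow_natCast, ← inv_pow]⟩

lemma adigit_lt {α x : ℝ} (hα : 1 < α) (hx : 0 < x) :
    α ^ (-(adigit α x : ℤ)) < x := by
  classical
  rw [adigit, dif_pos (adigit_exists hα hx)]
  exact Nat.find_spec (adigit_exists hα hx)

lemma adigit_min {α x : ℝ} (hα : 1 < α) (hx : 0 < x) {m : ℕ}
    (hm : m < adigit α x) : x ≤ α ^ (-(m : ℤ)) := by
  classical
  rw [adigit, dif_pos (adigit_exists hα hx)] at hm
  exact le_of_not_gt (Nat.find_min (adigit_exists hα hx) hm)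

lemma adigit_pos {α x : ℝ} (hα : 1 < α) (hx : 0 < x) (hx1 : x ≤ 1) :
    1 ≤ adigit α x := by
  by_contra h
  have h0 : adigit α x = 0 := by omega
  have := adigit_lt hα hx
  rw [h0] at this
  simp at this
  linarith

lemma adigit_le {α x : ℝ} (hα : 1 < α) (hx : 0 < x) (hx1 : x ≤ 1) :
    x ≤ α ^ (1 - (adigit α x : ℤ)) := by
  have h1 := adigit_pos hα hx hx1
  have hm : adigit α x - 1 < adigit α x := by omega
  have := adigit_min hα hx hm
  rwa [show (-(((adigit α x : ℕ) - 1 : ℕ) : ℤ)) = 1 - (adigit α x : ℤ) by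
    push_cast [h1]; ring] at this

lemma aseq_mem {α x : ℝ} (hα : 1 < α) (hx : x ∈ Set.Ioc (0:ℝ) 1) :
    ∀ k, aseq α x k ∈ Set.Ioc (0:ℝ) 1 := by
  have hαpos : (0:ℝ) < α := by linarith
  intro k
  induction k with
  | zero => exact hx
  | succ k ih =>
    obtain ⟨h0, h1⟩ := ih
    set y := aseq α x k with hy
    set D := adigit α y with hD
    have hlt : α ^ (-(D : ℤ)) < y := adigit_lt hα h0
    have hle : y ≤ α ^ (1 - (D : ℤ)) := adigit_le hα h0 h1
    have hαD : (0:ℝ) < α ^ D := pow_pos hαpos D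
    have hkey : (1:ℝ) < y * α ^ D := by
      have := mul_lt_mul_of_pos_right hlt hαD
      rwa [zpow_neg, zpow_natCast, inv_mul_cancel₀ (ne_of_gt hαD)] at this
    have hkey2 : y * α ^ D ≤ α := by
      have := mul_le_mul_of_nonneg_right hle (le_of_lt hαD)
      calc y * α ^ D ≤ α ^ (1 - (D:ℤ)) * α ^ D := this
        _ = α := by
            rw [← zpow_natCast α D, ← zpow_add₀ (ne_of_gt hαpos)]
            norm_num
    constructor
    · show 0 < (y * α ^ D - 1) / (α - 1)
      apply div_pos (by linarith) (by linarith)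
    · show (y * α ^ D - 1) / (α - 1) ≤ 1
      rw [div_le_one (by linarith)]
      linarith

/-- The key step identity. -/
lemma aseq_step {α x : ℝ} (hα : 1 < α) (hx : x ∈ Set.Ioc (0:ℝ) 1) (k : ℕ) :
    aseq α x k = α ^ (-(adigit α (aseq α x k) : ℤ))
      + (α - 1) * α ^ (-(adigit α (aseq α x k) : ℤ)) * aseq α x (k + 1) := by
  have hαpos : (0:ℝ) < α := by linarith
  set y := aseq α x k with hy
  set D := adigit α y with hD
  have hαD : (α:ℝ) ^ D ≠ 0 := ne_of_gt (pow_pos hαpos D)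
  have : aseq α x (k+1) = (y * α ^ D - 1) / (α - 1) := rfl
  have hne : α - 1 ≠ 0 := by linarith
  have h2 : (α - 1) * ((y * α ^ D - 1) / (α - 1)) = y * α ^ D - 1 :=
    mul_div_cancel₀ _ hne
  rw [this, zpow_neg, zpow_natCast, mul_comm (α-1), mul_assoc, h2]
  field_simp
  ring

theorem alphaExpansion_surjective (α : ℝ) (hα : 1 < α) :
    ∀ x ∈ Set.Ioc (0 : ℝ) 1,
      ∃ d : ℕ → ℕ, (∀ i, 1 ≤ d i) ∧ alphaExpansion α d = x := by
  intro x hx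
  have hαpos : (0:ℝ) < α := by linarith
  have hαne : (α:ℝ) ≠ 0 := ne_of_gt hαpos
  set d : ℕ → ℕ := fun k => adigit α (aseq α x k) with hd
  have hmem := aseq_mem hα hx
  have hdpos : ∀ i, 1 ≤ d i := fun i => adigit_pos hα (hmem i).1 (hmem i).2
  refine ⟨d, hdpos, ?_⟩
  set f : ℕ → ℝ := fun i =>
    (α - 1) ^ i * α ^ (-((∑ j ∈ Finset.range (i + 1), d j : ℕ) : ℤ)) with hf
  -- invariant
  have hinv : ∀ k, x = (∑ i ∈ Finset.range k, f i)
      + (α - 1) ^ k * α ^ (-((∑ j ∈ Finset.range k, d j : ℕ) : ℤ)) * aseq α x k := by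
    intro k
    induction k with
    | zero => simp [aseq]
    | succ k ih =>
      have hfk : f k = (α - 1) ^ k * α ^ (-((∑ j ∈ Finset.range (k+1), d j : ℕ) : ℤ)) := rfl
      rw [Finset.sum_range_succ, hfk]
      have hstep := aseq_step hα hx k
      have hsum : ((∑ j ∈ Finset.range (k+1), d j : ℕ) : ℤ)
          = (∑ j ∈ Finset.range k, d j : ℕ) + (d k : ℤ) := by
        rw [Finset.sum_range_succ]; push_cast; ring
      have hz : α ^ (-((∑ j ∈ Finset.range (k+1), d j : ℕ) : ℤ))
          = α ^ (-((∑ j ∈ Finset.range k, d j : ℕ) : ℤ)) * α ^ (-(d k : ℤ)) := by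
        rw [← zpow_add₀ hαne]; rw [hsum]; ring_nf
      conv_lhs => rw [ih]
      rw [hz, show aseq α x k = α ^ (-(d k : ℤ))
        + (α - 1) * α ^ (-(d k : ℤ)) * aseq α x (k + 1) from hstep]
      ring
  -- nonneg and bounds
  have hpow_le : ∀ k : ℕ, (α - 1) ^ k * α ^ (-((∑ j ∈ Finset.range k, d j : ℕ) : ℤ))
      ≤ ((α - 1) / α) ^ k := by
    intro k
    have hS : (k : ℤ) ≤ ((∑ j ∈ Finset.range k, d j : ℕ) : ℤ) := by
      have : k ≤ ∑ j ∈ Finset.range k, d j := by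
        calc k = ∑ j ∈ Finset.range k, 1 := by simp
          _ ≤ ∑ j ∈ Finset.range k, d j := Finset.sum_le_sum fun i _ => hdpos i
      exact_mod_cast this
    have hmono : α ^ (-((∑ j ∈ Finset.range k, d j : ℕ) : ℤ)) ≤ α ^ (-(k : ℤ)) :=
      zpow_le_zpow_right₀ (le_of_lt hα) (by omega)
    have h1 : (α - 1) ^ k * α ^ (-((∑ j ∈ Finset.range k, d j : ℕ) : ℤ))
        ≤ (α - 1) ^ k * α ^ (-(k : ℤ)) := by
      apply mul_le_mul_of_nonneg_left hmono (pow_nonneg (by linarith) k)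
    calc _ ≤ (α - 1) ^ k * α ^ (-(k : ℤ)) := h1
      _ = ((α - 1) / α) ^ k := by
          rw [div_pow, zpow_neg, zpow_natCast]
          rw [div_eq_mul_inv]
  have hratio0 : (0:ℝ) ≤ (α - 1) / α := div_nonneg (by linarith) (le_of_lt hαpos)
  have hratio1 : (α - 1) / α < 1 := by
    rw [div_lt_one hαpos]; linarith
  have hfnonneg : ∀ i, 0 ≤ f i := by
    intro i
    apply mul_nonneg (pow_nonneg (by linarith) i) (le_of_lt (zpow_pos hαpos _))
  -- summable
  have hfsum : Summable f := by
    refine Summable.of_nonneg_of_le hfnonneg ?_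
      (summable_geometric_of_lt_one hratio0 hratio1)
    intro i
    calc f i ≤ (α - 1) ^ i * α ^ (-(((∑ j ∈ Finset.range (i+1), d j : ℕ)) : ℤ)) := le_refl _
      _ ≤ (α - 1) ^ i * α ^ (-(i : ℤ)) := by
            apply mul_le_mul_of_nonneg_left _ (pow_nonneg (by linarith) i)
            apply zpow_le_zpow_right₀ (le_of_lt hα)
            have : i ≤ ∑ j ∈ Finset.range (i+1), d j := by
              calc i ≤ i + 1 := by omega
                _ = ∑ j ∈ Finset.range (i+1), 1 := by simp
                _ ≤ ∑ j ∈ Finset.range (i+1), d j := Finset.sum_le_sum fun j _ => hdpos j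
            have : (i:ℤ) ≤ ((∑ j ∈ Finset.range (i+1), d j : ℕ) : ℤ) := by exact_mod_cast this
            omega
      _ = ((α - 1) / α) ^ i := by rw [div_pow, zpow_neg, zpow_natCast, div_eq_mul_inv]
  -- tail tends to 0
  have htail : Filter.Tendsto (fun k => (α - 1) ^ k
      * α ^ (-((∑ j ∈ Finset.range k, d j : ℕ) : ℤ)) * aseq α x k)
      Filter.atTop (nhds 0) := by
    have hgeo : Filter.Tendsto (fun k : ℕ => ((α - 1) / α) ^ k) Filter.atTop (nhds 0) :=
      tendsto_pow_atTop_nhds_zero_of_lt_one hratio0 hratio1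
    apply squeeze_zero
    · intro k
      apply mul_nonneg (mul_nonneg (pow_nonneg (by linarith) k)
        (le_of_lt (zpow_pos hαpos _))) (le_of_lt (hmem k).1)
    · intro k
      calc (α - 1) ^ k * α ^ (-((∑ j ∈ Finset.range k, d j : ℕ) : ℤ)) * aseq α x k
          ≤ (α - 1) ^ k * α ^ (-((∑ j ∈ Finset.range k, d j : ℕ) : ℤ)) * 1 := by
            apply mul_le_mul_of_nonneg_left (hmem k).2
            exact mul_nonneg (pow_nonneg (by linarith) k) (le_of_lt (zpow_pos hαpos _))
        _ = (α - 1) ^ k * α ^ (-((∑ j ∈ Finset.range k, d j : ℕ) : ℤ)) := by ring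
        _ ≤ ((α - 1) / α) ^ k := hpow_le k
    · exact hgeo
  -- partial sums tend to x
  have hpartial : Filter.Tendsto (fun k => ∑ i ∈ Finset.range k, f i)
      Filter.atTop (nhds x) := by
    have : (fun k => ∑ i ∈ Finset.range k, f i)
        = fun k => x - (α - 1) ^ k * α ^ (-((∑ j ∈ Finset.range k, d j : ℕ) : ℤ))
          * aseq α x k := by
      funext k; have := hinv k; linarith
    rw [this]
    have := Filter.Tendsto.sub (tendsto_const_nhds (x := x) (f := Filter.atTop)) htail
    simpa using this
  have hhs : HasSum f x := (hfsum.hasSum_iff_tendsto_nat).mpr hpartial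
  exact hhs.tsum_eq
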